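/- Assume 2s̄ ≤ p. The following are equivalent: (a) the system is 2s̄-sparse τ-observable; (b) for every input sequence u ∈ U^{τ−1}, every actual state x* ∈ X, every attack E* with |supp(E*)| ≤ s̄ (with measurements Y_i = H_{u,i}(x*) + E*_i and attack indicator b*), and every pair (x,b) ∈ X × {0,1}^p satisfying the formula φ, one has x = x* and supp(b*) ⊆ supp(b). -/

import Mathlib

/-- Trajectory of the discrete-time system `x_{j+1} = f (x_j) (u_j)` started at `x`. -/
def traj {X U : Type*} (f : X → U → X) (u : ℕ → U) (x : X) : ℕ → X
  | 0 => x
  | j + 1 => f (traj f u x j) (u j)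

/-- Window measurement map of sensor `i` over a window of length `τ`:
`H_{u,i}(x) = (h_i(x₀), …, h_i(x_{τ-1}))`. -/
def Hmap {X U : Type*} {p : ℕ} (f : X → U → X) (h : X → Fin p → ℝ) (τ : ℕ)
    (u : ℕ → U) (i : Fin p) (x : X) : Fin τ → ℝ :=
  fun j => h (traj f u x (j : ℕ)) i

/-- `2s̄`-sparse `τ`-observability is equivalent to correct secure
state reconstruction under every `s̄`-sparse attack. -/
theorem stmt1 {X U : Type*} {p τ sbar : ℕ} (hτ : 1 ≤ τ) (hp : 2 * sbar ≤ p)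
    (f : X → U → X) (h : X → Fin p → ℝ) :
    (∀ (u : ℕ → U) (Γ : Finset (Fin p)), Γ.card = 2 * sbar →
      Function.Injective
        (fun x : X => fun i : {i : Fin p // i ∉ Γ} => Hmap f h τ u i.1 x))
    ↔
    (∀ (u : ℕ → U) (xstar : X) (Estar : Fin p → Fin τ → ℝ)
        (Y : Fin p → Fin τ → ℝ) (bstar : Fin p → Bool),
      (∀ i, Y i = Hmap f h τ u i xstar + Estar i) →
      (∀ i, bstar i = true ↔ Estar i ≠ 0) →
      Set.ncard {i : Fin p | Estar i ≠ 0} ≤ sbar →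
      ∀ (x : X) (b : Fin p → Bool),
        (∀ i, b i = false → Y i = Hmap f h τ u i x) →
        Set.ncard {i : Fin p | b i = true} ≤ sbar →
        x = xstar ∧ ∀ i, bstar i = true → b i = true) := by
  constructor
  · intro hInj u xstar Estar Y bstar hY hbstar hEcard x b hb hbcard
    -- finset versions of the supports
    set SE : Finset (Fin p) := Finset.univ.filter (fun i => Estar i ≠ 0) with hSE
    set SB : Finset (Fin p) := Finset.univ.filter (fun i => b i = true) with hSB
    have hSEcard : SE.card ≤ sbar := by
      have : {i : Fin p | Estar i ≠ 0} = (SE : Set (Fin p)) := by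
        ext i; simp [hSE]
      rw [this, Set.ncard_coe_finset] at hEcard; exact hEcard
    have hSBcard : SB.card ≤ sbar := by
      have : {i : Fin p | b i = true} = (SB : Set (Fin p)) := by
        ext i; simp [hSB]
      rw [this, Set.ncard_coe_finset] at hbcard; exact hbcard
    have hcard : (SE ∪ SB).card ≤ 2 * sbar := by
      calc (SE ∪ SB).card ≤ SE.card + SB.card := Finset.card_union_le _ _
        _ ≤ sbar + sbar := Nat.add_le_add hSEcard hSBcard
        _ = 2 * sbar := by ring
    obtain ⟨Γ, hΓ1, _, hΓcard⟩ :=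
      Finset.exists_subsuperset_card_eq (Finset.subset_univ (SE ∪ SB)) hcard
        (by simpa using hp)
    have hxx : x = xstar := by
      apply hInj u Γ hΓcard
      funext i
      obtain ⟨i, hi⟩ := i
      have hiE : Estar i = 0 := by
        by_contra hc
        exact hi (hΓ1 (Finset.mem_union_left _ (by simp [hSE, hc])))
      have hib : b i = false := by
        by_contra hc
        exact hi (hΓ1 (Finset.mem_union_right _
          (by simp [hSB]; simpa using hc)))
      simp only
      rw [← hb i hib, hY i, hiE, add_zero]
    refine ⟨hxx, ?_⟩
    intro i hbi
    by_contra hc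
    have hib : b i = false := by
      cases hbi' : b i with
      | false => rfl
      | true => exact absurd hbi' hc
    have h1 : Y i = Hmap f h τ u i xstar := by rw [hb i hib, hxx]
    have h2 : Estar i = 0 := by
      have := hY i
      rw [h1] at this
      have := add_left_cancel (a := Hmap f h τ u i xstar)
        (by rw [← this, add_zero] : Hmap f h τ u i xstar + (0 : Fin τ → ℝ)
          = Hmap f h τ u i xstar + Estar i)
      exact this.symm
    exact ((hbstar i).mp hbi) h2
  · intro hRec u Γ hΓcard x₁ x₂ hx
    have hs : sbar ≤ Γ.card := by omega
    obtain ⟨Γ₁, hΓ₁sub, hΓ₁card⟩ := Finset.exists_subset_card_eq hs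
    set Γ₂ : Finset (Fin p) := Γ \ Γ₁ with hΓ₂
    have hΓ₂card : Γ₂.card = sbar := by
      rw [hΓ₂, Finset.card_sdiff_of_subset hΓ₁sub, hΓcard, hΓ₁card]; omega
    set Estar : Fin p → Fin τ → ℝ :=
      fun i => if i ∈ Γ₁ then Hmap f h τ u i x₁ - Hmap f h τ u i x₂ else 0 with hE
    set Y : Fin p → Fin τ → ℝ := fun i => Hmap f h τ u i x₂ + Estar i with hYdef
    have hagree : ∀ i : Fin p, i ∉ Γ → Hmap f h τ u i x₁ = Hmap f h τ u i x₂ := by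
      intro i hi
      exact congrFun hx ⟨i, hi⟩
    have key := hRec u x₂ Estar Y (fun i => decide (Estar i ≠ 0))
      (fun i => rfl)
      (fun i => by simp)
      (by
        have hsub : {i : Fin p | Estar i ≠ 0} ⊆ (Γ₁ : Set (Fin p)) := by
          intro i hi
          simp only [Set.mem_setOf_eq, hE] at hi
          by_contra hc
          rw [Finset.mem_coe] at hc
          simp [hc] at hi
        calc {i : Fin p | Estar i ≠ 0}.ncard ≤ (Γ₁ : Set (Fin p)).ncard :=
              Set.ncard_le_ncard hsub (Γ₁.finite_toSet)
          _ = sbar := by rw [Set.ncard_coe_finset, hΓ₁card])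
      x₁ (fun i => decide (i ∈ Γ₂))
      (by
        intro i hi
        have hi2 : i ∉ Γ₂ := by simpa using hi
        by_cases h1 : i ∈ Γ₁
        · simp only [hYdef, hE, if_pos h1]
          abel
        · have hiΓ : i ∉ Γ := by
            intro hc
            exact hi2 (Finset.mem_sdiff.mpr ⟨hc, h1⟩)
          simp only [hYdef, hE, if_neg h1, add_zero]
          exact (hagree i hiΓ).symm)
      (by
        have : {i : Fin p | decide (i ∈ Γ₂) = true} = (Γ₂ : Set (Fin p)) := by
          ext i; simp
        rw [this, Set.ncard_coe_finset, hΓ₂card])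
    exact key.1
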